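/- Let Z(x) = ∑_{n≥0} (x^{qn}/(λ^n q^n n!)) exp((λ^r/(r+1))((qn-1/2)^{r+1} - (-1/2)^{r+1})). Then the operator λ x d/dx - x^{q+1/2} exp((q/(r+1)) ∑_{i=0}^r x^{-q}(λ x d/dx)^i x^q (λ x d/dx)^{r-i}) x^{-1/2} annihilates Z. -/

import Mathlib

open PowerSeries

/-- The principal specialization of the mixed `q`-double `r`-spin partition function, as a
formal power series: `Z = ∑_{n ≥ 0} (x^{qn}/(λ^n q^n n!)) exp((λ^r/(r+1))((qn-1/2)^{r+1} - (-1/2)^{r+1}))`. -/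
noncomputable def Zmix (q r : ℕ) (l : ℝ) : PowerSeries ℝ :=
  PowerSeries.mk fun k =>
    if q ∣ k then
      1 / (l ^ (k / q) * (q : ℝ) ^ (k / q) * (Nat.factorial (k / q) : ℝ)) *
        Real.exp (l ^ r / ((r : ℝ) + 1) *
          (((q : ℝ) * ((k / q : ℕ) : ℝ) - 1 / 2) ^ (r + 1) - (-(1 / 2) : ℝ) ^ (r + 1)))
    else 0

/-- The operator `B = x^{q+1/2} exp((q/(r+1)) ∑_{i=0}^r x^{-q}(λ x d/dx)^i x^q (λ x d/dx)^{r-i}) x^{-1/2}`,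
acting on `x^n` by `B x^n = exp((λ^r/(r+1))((n+q-1/2)^{r+1} - (n-1/2)^{r+1})) x^{n+q}`. -/
noncomputable def opB (q r : ℕ) (l : ℝ) (f : PowerSeries ℝ) : PowerSeries ℝ :=
  PowerSeries.mk fun n =>
    if q ≤ n then
      Real.exp (l ^ r / ((r : ℝ) + 1) *
          ((((n - q : ℕ) : ℝ) + (q : ℝ) - 1 / 2) ^ (r + 1) -
            (((n - q : ℕ) : ℝ) - 1 / 2) ^ (r + 1))) *
        PowerSeries.coeff (n - q) f
    else 0

/-- The operator `λ x d/dx`, acting on `x^n` by multiplication by `λn`. -/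
noncomputable def xDx (l : ℝ) (f : PowerSeries ℝ) : PowerSeries ℝ :=
  PowerSeries.mk fun n => l * (n : ℝ) * PowerSeries.coeff n f

/-- the operator `λ x d/dx - B` annihilates `Z`. -/
theorem mixed_quantum_curve_annihilates (q r : ℕ) (hq : 0 < q) (hr : 0 < r) (l : ℝ)
    (hl : l ≠ 0) :
    xDx l (Zmix q r l) - opB q r l (Zmix q r l) = 0 := by
  ext n
  simp only [xDx, opB, Zmix, map_sub, coeff_mk, map_zero]
  rw [sub_eq_zero]
  by_cases hdvd : q ∣ n
  · obtain ⟨m, rfl⟩ := hdvd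
    rcases Nat.eq_zero_or_pos m with rfl | hm
    · simp [Nat.not_le.mpr hq]
    · obtain ⟨k, rfl⟩ := Nat.exists_eq_add_of_lt hm
      simp only [zero_add] at *
      have hqn : q ≤ q * (k + 1) := Nat.le_mul_of_pos_right q (Nat.succ_pos k)
      rw [if_pos hqn]
      have hsub : q * (k + 1) - q = q * k := by rw [Nat.mul_succ]; omega
      rw [hsub, if_pos (Dvd.intro k rfl), if_pos (Dvd.intro (k+1) rfl)]
      rw [Nat.mul_div_cancel_left _ hq, Nat.mul_div_cancel_left _ hq]
      conv_rhs => rw [mul_left_comm, ← Real.exp_add]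
      have hexp : l ^ r / ((r : ℝ) + 1) *
            ((((q * k : ℕ) : ℝ) + (q : ℝ) - 1 / 2) ^ (r + 1) -
              (((q * k : ℕ) : ℝ) - 1 / 2) ^ (r + 1)) +
          l ^ r / ((r : ℝ) + 1) *
            (((q : ℝ) * (k : ℝ) - 1 / 2) ^ (r + 1) - (-(1 / 2) : ℝ) ^ (r + 1)) =
          l ^ r / ((r : ℝ) + 1) *
            (((q : ℝ) * ((k + 1 : ℕ) : ℝ) - 1 / 2) ^ (r + 1) - (-(1 / 2) : ℝ) ^ (r + 1)) := by
        push_cast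
        ring
      rw [hexp]
      have hq' : (q : ℝ) ≠ 0 := Nat.cast_ne_zero.mpr hq.ne'
      have hfk : (Nat.factorial k : ℝ) ≠ 0 := Nat.cast_ne_zero.mpr (Nat.factorial_ne_zero k)
      have hfk1 : (Nat.factorial (k + 1) : ℝ) ≠ 0 :=
        Nat.cast_ne_zero.mpr (Nat.factorial_ne_zero (k + 1))
      have hf : (Nat.factorial (k + 1) : ℝ) = ((k : ℝ) + 1) * Nat.factorial k := by
        rw [Nat.factorial_succ]; push_cast; ring
      rw [hf]
      push_cast
      field_simp
      ring
  · rw [if_neg hdvd]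
    by_cases hle : q ≤ n
    · have hq2 : ¬ q ∣ n - q := fun h =>
        hdvd ((Nat.sub_add_cancel hle) ▸ Nat.dvd_add h (dvd_refl q))
      rw [if_pos hle, if_neg hq2]
      simp
    · rw [if_neg hle]
      simp
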